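/- arXiv:2604.13642 — 4 statements merged into one kernel-verified Lean document; each statement's English description precedes it below -/
import Mathlib

section
/- Let U be a positive natural number, and let A and B be multisets whose elements lie in {1, 2, ..., U}. If |A| ≥ 2U and |B| ≥ 2U, then there exist non-empty sub-multisets A' ⊆ A and B' ⊆ B such that the sum of the elements of A' equals the sum of the elements of B'. -/
private lemma list_sum_one_le {l : List ℕ} (h : ∀ x ∈ l, 1 ≤ x) (hne : l ≠ []) :
    1 ≤ l.sum := by
  cases l with
  | nil => exact absurd rfl hne
  | cons a t =>
    have : 1 ≤ a := h a (by simp)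
    simp [List.sum_cons]; omega

private lemma key (U : ℕ) (hU : 0 < U) (a b : List ℕ)
    (ha : ∀ x ∈ a, 1 ≤ x ∧ x ≤ U) (hb : ∀ x ∈ b, 1 ≤ x ∧ x ≤ U)
    (hla : U + 1 ≤ a.length) (hsum : a.sum ≤ b.sum) :
    ∃ A' B' : Multiset ℕ, A' ≠ 0 ∧ B' ≠ 0 ∧ A' ≤ ↑a ∧ B' ≤ ↑b ∧ A'.sum = B'.sum := by
  set S : ℕ → ℕ := fun i => (a.take i).sum with hS
  set T : ℕ → ℕ := fun j => (b.take j).sum with hT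
  -- segment sum decomposition
  have hseg : ∀ i i', i ≤ i' → S i' = S i + ((a.drop i).take (i' - i)).sum := by
    intro i i' h
    have : i' = i + (i' - i) := by omega
    rw [this]
    simp only [hS, List.take_add, List.sum_append, Nat.add_sub_cancel_left]
  have hsegT : ∀ j j', j ≤ j' → T j' = T j + ((b.drop j).take (j' - j)).sum := by
    intro j j' h
    have : j' = j + (j' - j) := by omega
    rw [this]
    simp only [hT, List.take_add, List.sum_append, Nat.add_sub_cancel_left]
  -- S strict mono on valid range
  have hSlt : ∀ i i', i < i' → i' ≤ a.length → S i < S i' := by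
    intro i i' h h'
    rw [hseg i i' (le_of_lt h)]
    have hne : (a.drop i).take (i' - i) ≠ [] := by
      have : ((a.drop i).take (i' - i)).length = min (i' - i) (a.length - i) := by simp
      intro hcon
      rw [hcon] at this
      simp at this
      omega
    have := list_sum_one_le (l := (a.drop i).take (i' - i))
      (fun x hx => (ha x (((List.take_sublist _ _).trans (List.drop_sublist _ _)).subset hx)).1) hne
    omega
  have hTmono : ∀ j j', j ≤ j' → T j ≤ T j' := by
    intro j j' h
    rw [hsegT j j' h]; omega
  -- S i ≤ b.sum
  have hSle : ∀ i, S i ≤ b.sum := by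
    intro i
    have : S i ≤ a.sum := by
      simp only [hS]
      conv_rhs => rw [← List.take_append_drop i a]
      rw [List.sum_append]; omega
    omega
  have hTlen : T b.length = b.sum := by simp [hT]
  have hex : ∀ i, ∃ j, S i ≤ T j := fun i => ⟨b.length, by rw [hTlen]; exact hSle i⟩
  set J : ℕ → ℕ := fun i => Nat.find (hex i) with hJ
  have hJspec : ∀ i, S i ≤ T (J i) := fun i => Nat.find_spec (hex i)
  have hJle : ∀ i, J i ≤ b.length := fun i => Nat.find_le (by rw [hTlen]; exact hSle i)
  have hSpos : ∀ i, 1 ≤ i → i ≤ a.length → 1 ≤ S i := by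
    intro i h1 h2
    apply list_sum_one_le (fun x hx => (ha x ((List.take_sublist _ _).subset hx)).1)
    intro hcon
    have := congrArg List.length hcon
    simp only [List.length_take, List.length_nil] at this
    omega
  -- the key bound : for 1 ≤ i ≤ a.length, T (J i) - S i < U
  have hbound : ∀ i, 1 ≤ i → i ≤ a.length → T (J i) < S i + U := by
    intro i h1 h2
    have hpos : 1 ≤ S i := hSpos i h1 h2
    have hJpos : 1 ≤ J i := by
      rcases Nat.eq_zero_or_pos (J i) with h | h
      · have := hJspec i
        rw [h] at this
        simp [hT] at this
        omega
      · exact h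
    have hmin : ¬ (S i ≤ T (J i - 1)) := Nat.find_min (hex i) (show J i - 1 < J i by omega)
    have hlt : J i - 1 < b.length := by have := hJle i; omega
    have hstep : T (J i) = T (J i - 1) + b[J i - 1] := by
      have := List.sum_take_succ b (J i - 1) hlt
      have heq : J i - 1 + 1 = J i := by omega
      rw [heq] at this
      exact this
    have : b[J i - 1] ≤ U := (hb _ (List.getElem_mem hlt)).2
    omega
  -- pigeonhole
  have hcard : (Finset.range U).card < (Finset.Icc 1 (U + 1)).card := by
    simp [Nat.card_Icc]
  have hmaps : ∀ i ∈ Finset.Icc 1 (U + 1), T (J i) - S i ∈ Finset.range U := by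
    intro i hi
    simp only [Finset.mem_Icc] at hi
    have := hbound i hi.1 (by omega)
    have := hJspec i
    simp only [Finset.mem_range]
    omega
  have main : ∀ p q : ℕ, 1 ≤ p → p < q → q ≤ a.length →
      T (J p) - S p = T (J q) - S q →
      ∃ A' B' : Multiset ℕ, A' ≠ 0 ∧ B' ≠ 0 ∧ A' ≤ ↑a ∧ B' ≤ ↑b ∧ A'.sum = B'.sum := by
    intro p q hp hpq hqlen hfeq
    have hSp := hJspec p
    have hSq := hJspec q
    have hSlt' : S p < S q := hSlt p q hpq hqlen
    have hTlt : T (J p) < T (J q) := by omega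
    have hJlt : J p < J q := by
      by_contra h
      have := hTmono (J q) (J p) (by omega)
      omega
    refine ⟨↑((a.drop p).take (q - p)), ↑((b.drop (J p)).take (J q - J p)), ?_, ?_, ?_, ?_, ?_⟩
    · rw [Ne, Multiset.coe_eq_zero]
      intro hcon
      have := congrArg List.length hcon
      simp at this
      omega
    · rw [Ne, Multiset.coe_eq_zero]
      intro hcon
      have := congrArg List.length hcon
      simp at this
      have := hJle q
      omega
    · exact Multiset.coe_le.2 ((List.take_sublist _ _).trans (List.drop_sublist _ _)).subperm
    · exact Multiset.coe_le.2 ((List.take_sublist _ _).trans (List.drop_sublist _ _)).subperm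
    · rw [Multiset.sum_coe, Multiset.sum_coe]
      have h1 := hseg p q (le_of_lt hpq)
      have h2 := hsegT (J p) (J q) (le_of_lt hJlt)
      omega
  obtain ⟨i, hi, i', hi', hne, hfeq⟩ :=
    Finset.exists_ne_map_eq_of_card_lt_of_maps_to hcard hmaps
  simp only [Finset.mem_Icc] at hi hi'
  rcases hne.lt_or_gt with hlt | hlt
  · exact main i i' hi.1 hlt (by omega) hfeq
  · exact main i' i hi'.1 hlt (by omega) hfeq.symm

theorem equal_sum_submultisets (U : ℕ) (hU : 0 < U) (A B : Multiset ℕ)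
    (hA : ∀ a ∈ A, 1 ≤ a ∧ a ≤ U) (hB : ∀ b ∈ B, 1 ≤ b ∧ b ≤ U)
    (hcardA : 2 * U ≤ Multiset.card A) (hcardB : 2 * U ≤ Multiset.card B) :
    ∃ A' B' : Multiset ℕ, A' ≠ 0 ∧ B' ≠ 0 ∧ A' ≤ A ∧ B' ≤ B ∧ A'.sum = B'.sum := by
  have ha : ∀ x ∈ A.toList, 1 ≤ x ∧ x ≤ U := fun x hx => hA x (by rwa [← Multiset.mem_toList])
  have hb : ∀ x ∈ B.toList, 1 ≤ x ∧ x ≤ U := fun x hx => hB x (by rwa [← Multiset.mem_toList])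
  have hla : U + 1 ≤ A.toList.length := by rw [Multiset.length_toList]; omega
  have hlb : U + 1 ≤ B.toList.length := by rw [Multiset.length_toList]; omega
  rcases le_total A.toList.sum B.toList.sum with h | h
  · obtain ⟨A', B', h1, h2, h3, h4, h5⟩ := key U hU A.toList B.toList ha hb hla h
    rw [Multiset.coe_toList] at h3 h4
    exact ⟨A', B', h1, h2, h3, h4, h5⟩
  · obtain ⟨B', A', h1, h2, h3, h4, h5⟩ := key U hU B.toList A.toList hb ha hlb h
    rw [Multiset.coe_toList] at h3 h4
    exact ⟨A', B', h2, h1, h4, h3, h5.symm⟩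
end

section
/- Let jobs have due dates d_1 ≤ d_2 ≤ ... ≤ d_n and let C, C' : {1,...,n} → ℝ be completion-time vectors. Fix j* and suppose there are disjoint sets J_H ⊆ {1,...,j*} and J_I ⊆ {j*+1,...,n} such that: C'_j ≤ C_j for all j ∈ J_H; C'_j ≤ C_{j*} for all j ∈ J_I; and C'_j = C_j for all j ∉ J_H ∪ J_I. Then max_j (C'_j − d_j) ≤ max_j (C_j − d_j). -/
theorem swap_not_increase_Lmax (n : ℕ) (hn : 0 < n) (d C C' : Fin n → ℝ)
    (hd : ∀ i j : Fin n, i ≤ j → d i ≤ d j) (jstar : Fin n)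
    (JH JI : Finset (Fin n)) (hdisj : Disjoint JH JI)
    (hHle : ∀ j ∈ JH, j ≤ jstar) (hIgt : ∀ j ∈ JI, jstar < j)
    (hH : ∀ j ∈ JH, C' j ≤ C j) (hI : ∀ j ∈ JI, C' j ≤ C jstar)
    (hrest : ∀ j, j ∉ JH → j ∉ JI → C' j = C j) :
    Finset.univ.sup' ⟨⟨0, hn⟩, Finset.mem_univ _⟩ (fun j => C' j - d j) ≤
      Finset.univ.sup' ⟨⟨0, hn⟩, Finset.mem_univ _⟩ (fun j => C j - d j) := by
  apply Finset.sup'_le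
  intro j _
  by_cases hj : j ∈ JI
  · calc C' j - d j ≤ C jstar - d jstar := by
          have := hI j hj
          have := hd jstar j (le_of_lt (hIgt j hj))
          linarith
       _ ≤ _ := Finset.le_sup' (fun j => C j - d j) (Finset.mem_univ jstar)
  · by_cases hj2 : j ∈ JH
    · calc C' j - d j ≤ C j - d j := by have := hH j hj2; linarith
        _ ≤ _ := Finset.le_sup' (fun j => C j - d j) (Finset.mem_univ j)
    · rw [hrest j hj2 hj]
      exact Finset.le_sup' (fun j => C j - d j) (Finset.mem_univ j)
end

section
/- Let U be a positive natural number and let A, B be finite multisets of elements of {1, ..., U} with |A| = |B| = 2U. For the greedily constructed nested index sets A_i, B_i (adding index i to the side with currently smaller sum, ties going to A), there exist 0 ≤ i < j ≤ 2U such that the sub-multisets A_j \ A_i of A and B_j \ B_i of B are both non-empty and have equal sums. -/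
/-- The greedy construction of nested index sets for the enumerated multisets
`a` and `b`: at step `i+1`, index `i+1` is added to the `A`-side if the current
`A`-sum is at most the current `B`-sum (ties going to `A`), and to the `B`-side
otherwise. `(greedySets a b i).1` is the index set `A_i`, and
`(greedySets a b i).2` is the index set `B_i`. -/
def greedySets (a b : ℕ → ℕ) : ℕ → Finset ℕ × Finset ℕ
  | 0 => (∅, ∅)
  | i + 1 =>
    let P := greedySets a b i
    if P.1.sum a ≤ P.2.sum b then (insert (i + 1) P.1, P.2)
    else (P.1, insert (i + 1) P.2)

lemma greedySets_succ (a b : ℕ → ℕ) (i : ℕ) :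
    greedySets a b (i + 1) =
      if (greedySets a b i).1.sum a ≤ (greedySets a b i).2.sum b then
        (insert (i + 1) (greedySets a b i).1, (greedySets a b i).2)
      else ((greedySets a b i).1, insert (i + 1) (greedySets a b i).2) := rfl

lemma greedySets_mem_bound (a b : ℕ → ℕ) :
    ∀ i k, (k ∈ (greedySets a b i).1 ∨ k ∈ (greedySets a b i).2) → 1 ≤ k ∧ k ≤ i := by
  intro i
  induction i with
  | zero => simp [greedySets]
  | succ n ih =>
    intro k hk
    by_cases h : (greedySets a b n).1.sum a ≤ (greedySets a b n).2.sum b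
    · simp only [greedySets_succ, h, if_true, Finset.mem_insert] at hk
      rcases hk with (rfl | h1) | h2
      · omega
      · have := ih k (Or.inl h1); omega
      · have := ih k (Or.inr h2); omega
    · simp only [greedySets_succ, h, if_false, Finset.mem_insert] at hk
      rcases hk with h1 | (rfl | h2)
      · have := ih k (Or.inl h1); omega
      · omega
      · have := ih k (Or.inr h2); omega

lemma greedySets_mono (a b : ℕ → ℕ) {i j : ℕ} (hij : i ≤ j) :
    (greedySets a b i).1 ⊆ (greedySets a b j).1 ∧ (greedySets a b i).2 ⊆ (greedySets a b j).2 := by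
  induction j, hij using Nat.le_induction with
  | base => exact ⟨subset_rfl, subset_rfl⟩
  | succ n hn ih =>
    by_cases h : (greedySets a b n).1.sum a ≤ (greedySets a b n).2.sum b <;>
      simp only [greedySets_succ, h, if_true, if_false] <;>
      constructor <;>
      first
        | exact ih.1.trans (Finset.subset_insert _ _)
        | exact ih.2.trans (Finset.subset_insert _ _)
        | exact ih.1
        | exact ih.2

lemma greedySets_card (a b : ℕ → ℕ) :
    ∀ i, (greedySets a b i).1.card + (greedySets a b i).2.card = i := by
  intro i
  induction i with
  | zero => simp [greedySets]
  | succ n ih =>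
    have h1 : (n + 1) ∉ (greedySets a b n).1 := fun h =>
      by have := greedySets_mem_bound a b n _ (Or.inl h); omega
    have h2 : (n + 1) ∉ (greedySets a b n).2 := fun h =>
      by have := greedySets_mem_bound a b n _ (Or.inr h); omega
    by_cases h : (greedySets a b n).1.sum a ≤ (greedySets a b n).2.sum b <;>
      simp only [greedySets_succ, h, if_true, if_false, Finset.card_insert_of_notMem h1,
        Finset.card_insert_of_notMem h2] <;> omega

theorem greedy_equal_sum_differences (U : ℕ) (hU : 0 < U) (a b : ℕ → ℕ)
    (ha : ∀ k, 1 ≤ k → k ≤ 2 * U → 1 ≤ a k ∧ a k ≤ U)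
    (hb : ∀ k, 1 ≤ k → k ≤ 2 * U → 1 ≤ b k ∧ b k ≤ U) :
    ∃ i j : ℕ, i < j ∧ j ≤ 2 * U ∧
      ((greedySets a b j).1 \ (greedySets a b i).1).Nonempty ∧
      ((greedySets a b j).2 \ (greedySets a b i).2).Nonempty ∧
      ((greedySets a b j).1 \ (greedySets a b i).1).sum a =
        ((greedySets a b j).2 \ (greedySets a b i).2).sum b := by
  set sA : ℕ → ℕ := fun i => (greedySets a b i).1.sum a with hsAdef
  set sB : ℕ → ℕ := fun i => (greedySets a b i).2.sum b with hsBdef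
  set f : ℕ → ℤ := fun i => (sA i : ℤ) - (sB i : ℤ) with hf
  -- boundedness of f
  have hbound : ∀ i, i ≤ 2 * U → f i ∈ Finset.Icc (1 - (U : ℤ)) U := by
    intro i
    induction i with
    | zero =>
      intro _
      simp only [hf, hsAdef, hsBdef, greedySets, Finset.sum_empty, Finset.mem_Icc]
      push_cast
      omega
    | succ n ih =>
      intro hn
      have ihn := ih (by omega)
      simp only [Finset.mem_Icc, hf, hsAdef, hsBdef] at ihn ⊢
      by_cases h : (greedySets a b n).1.sum a ≤ (greedySets a b n).2.sum b
      · have han := ha (n + 1) (by omega) hn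
        have h1 : (n + 1) ∉ (greedySets a b n).1 := fun h =>
          by have := greedySets_mem_bound a b n _ (Or.inl h); omega
        simp only [greedySets_succ, h, if_true, Finset.sum_insert h1]
        have e1 : (∑ x ∈ (greedySets a b n).1, a x) = (greedySets a b n).1.sum a := rfl
        have e2 : (∑ x ∈ (greedySets a b n).2, b x) = (greedySets a b n).2.sum b := rfl
        omega
      · have hbn := hb (n + 1) (by omega) hn
        have h2 : (n + 1) ∉ (greedySets a b n).2 := fun h =>
          by have := greedySets_mem_bound a b n _ (Or.inr h); omega
        simp only [greedySets_succ, h, if_false, Finset.sum_insert h2]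
        have h' := Nat.lt_of_not_le h
        have e1 : (∑ x ∈ (greedySets a b n).1, a x) = (greedySets a b n).1.sum a := rfl
        have e2 : (∑ x ∈ (greedySets a b n).2, b x) = (greedySets a b n).2.sum b := rfl
        omega
  -- pigeonhole
  have hcard : (Finset.Icc (1 - (U : ℤ)) U).card < (Finset.range (2 * U + 1)).card := by
    rw [Int.card_Icc, Finset.card_range]
    omega
  obtain ⟨i, hi, j, hj, hij, hfij⟩ :=
    Finset.exists_ne_map_eq_of_card_lt_of_maps_to hcard
      (fun i hi => hbound i (Nat.lt_succ_iff.mp (Finset.mem_range.mp hi)))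
  rw [Finset.mem_range, Nat.lt_succ_iff] at hi hj
  wlog hlt : i < j generalizing i j
  · exact this j hj i hi (Ne.symm hij) hfij.symm (by omega)
  refine ⟨i, j, hlt, hj, ?_⟩
  obtain ⟨hsub1, hsub2⟩ := greedySets_mono a b hlt.le
  -- sums of differences
  have hsAd : ((greedySets a b j).1 \ (greedySets a b i).1).sum a
      + (greedySets a b i).1.sum a = (greedySets a b j).1.sum a :=
    Finset.sum_sdiff hsub1
  have hsBd : ((greedySets a b j).2 \ (greedySets a b i).2).sum b
      + (greedySets a b i).2.sum b = (greedySets a b j).2.sum b :=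
    Finset.sum_sdiff hsub2
  have hsum : ((greedySets a b j).1 \ (greedySets a b i).1).sum a =
      ((greedySets a b j).2 \ (greedySets a b i).2).sum b := by
    simp only [hf, hsAdef, hsBdef] at hfij
    omega
  -- nonemptiness
  have hci := greedySets_card a b i
  have hcj := greedySets_card a b j
  have hc1 := Finset.card_sdiff_of_subset hsub1
  have hc2 := Finset.card_sdiff_of_subset hsub2
  have hle1 := Finset.card_le_card hsub1
  have hle2 := Finset.card_le_card hsub2
  have hone : ((greedySets a b j).1 \ (greedySets a b i).1).Nonempty ∨
      ((greedySets a b j).2 \ (greedySets a b i).2).Nonempty := by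
    rw [← Finset.card_pos, ← Finset.card_pos, hc1, hc2]
    omega
  have hposA : ∀ s : Finset ℕ, s ⊆ (greedySets a b j).1 → s.Nonempty → 1 ≤ s.sum a := by
    rintro s hs ⟨x, hx⟩
    have hxb := greedySets_mem_bound a b j x (Or.inl (hs hx))
    calc 1 ≤ a x := (ha x hxb.1 (by omega)).1
    _ ≤ s.sum a := Finset.single_le_sum (fun _ _ => Nat.zero_le _) hx
  have hposB : ∀ s : Finset ℕ, s ⊆ (greedySets a b j).2 → s.Nonempty → 1 ≤ s.sum b := by
    rintro s hs ⟨x, hx⟩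
    have hxb := greedySets_mem_bound a b j x (Or.inr (hs hx))
    calc 1 ≤ b x := (hb x hxb.1 (by omega)).1
    _ ≤ s.sum b := Finset.single_le_sum (fun _ _ => Nat.zero_le _) hx
  have hSpos : 1 ≤ ((greedySets a b j).1 \ (greedySets a b i).1).sum a := by
    rcases hone with h | h
    · exact hposA _ Finset.sdiff_subset h
    · rw [hsum]; exact hposB _ Finset.sdiff_subset h
  refine ⟨?_, ?_, hsum⟩
  · rw [Finset.nonempty_iff_ne_empty]
    intro hc
    rw [hc, Finset.sum_empty] at hSpos; omega
  · rw [Finset.nonempty_iff_ne_empty]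
    intro hc
    rw [hsum, hc, Finset.sum_empty] at hSpos; omega
end

section
/- Let J = {1,...,n} with positive processing times p_j, and let σ be a proper schedule on m machines in which machine M_h has strictly maximal load and M_i has strictly minimal load with P(J_h(σ)) − P(J_i(σ)) > p_max, where p_max = max_j p_j. Let j be the last job processed on M_h, and let σ̂ be the schedule obtained by moving j to the end of M_i (then re-sorting M_i by index). Then the completion time of job j in σ̂ is at most its completion time in σ, and the completion time of every other job does not increase. Consequently, for any regular objective f, f(σ̂) ≤ f(σ). -/
/-- Completion time of job `j` in the proper schedule given by the machine
assignment `σ`. -/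
def completion {n m : ℕ} (p : Fin n → ℕ) (σ : Fin n → Fin m) (j : Fin n) : ℕ :=
  ∑ j' ∈ Finset.univ.filter (fun j' => σ j' = σ j ∧ j' ≤ j), p j'

/-- Total load of machine `i` under assignment `σ`. -/
def load {n m : ℕ} (p : Fin n → ℕ) (σ : Fin n → Fin m) (i : Fin m) : ℕ :=
  ∑ j ∈ Finset.univ.filter (fun j => σ j = i), p j

theorem move_last_job_not_worse (n m : ℕ) (p : Fin n → ℕ) (hp : ∀ j, 0 < p j)
    (σ : Fin n → Fin m) (h i : Fin m)
    (hmax : ∀ a : Fin m, a ≠ h → load p σ a < load p σ h)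
    (hmin : ∀ a : Fin m, a ≠ i → load p σ i < load p σ a)
    (hgap : ((Finset.univ.sup p : ℕ) : ℤ) < (load p σ h : ℤ) - (load p σ i : ℤ))
    (j : Fin n) (hj : σ j = h) (hlast : ∀ j' : Fin n, σ j' = h → j' ≤ j) :
    (∀ j' : Fin n,
        Function.update (completion p σ) j (load p σ i + p j) j' ≤
          completion p σ j') ∧
    (∀ f : (Fin n → ℕ) → ℝ,
        (∀ C C' : Fin n → ℕ, (∀ j', C j' ≤ C' j') → f C ≤ f C') →
        f (Function.update (completion p σ) j (load p σ i + p j)) ≤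
          f (completion p σ)) := by
  have hcj : completion p σ j = load p σ h := by
    unfold completion load
    apply Finset.sum_congr _ (fun _ _ => rfl)
    ext j'
    simp only [Finset.mem_filter, Finset.mem_univ, true_and, hj]
    exact ⟨fun ⟨h1, _⟩ => h1, fun h1 => ⟨h1, hlast j' h1⟩⟩
  have hkey : load p σ i + p j ≤ completion p σ j := by
    rw [hcj]
    have hpj : p j ≤ Finset.univ.sup p := Finset.le_sup (Finset.mem_univ j)
    omega
  have hpt : ∀ j' : Fin n,
      Function.update (completion p σ) j (load p σ i + p j) j' ≤ completion p σ j' := by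
    intro j'
    by_cases hjj : j' = j
    · subst hjj; simp [Function.update_self, hkey]
    · simp [Function.update_of_ne hjj]
  exact ⟨hpt, fun f hf => hf _ _ hpt⟩
end
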